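/- arXiv:0910.4106 — 6 statements merged into one kernel-verified Lean document; each statement's English description precedes it below -/
import Mathlib

section
/- Let X be a linearly ordered set with a topology having a base of order-convex sets (a GO-space), let E be a closed discrete subset of X, and let S ⊆ X. Suppose for each x ∈ S there is e(x) ∈ E with x < e(x) such that the closed intervals [x, e(x)] for x ∈ S are pairwise disjoint. Then any convex open set meeting at most one point of E meets at most three of the intervals [x, e(x)]. -/
open Set TopologicalSpace

def PointFinite {X : Type*} (C : Set (Set X)) : Prop :=
  ∀ x : X, {U ∈ C | x ∈ U}.Finite

def Refines {X : Type*} (A B : Set (Set X)) : Prop :=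
  ∀ U ∈ A, ∃ V ∈ B, U ⊆ V

def IsOpenCover {X : Type*} [TopologicalSpace X] (C : Set (Set X)) : Prop :=
  (∀ U ∈ C, IsOpen U) ∧ ⋃₀ C = Set.univ

def MonotonicallyMetacompact (X : Type*) [TopologicalSpace X] : Prop :=
  ∃ r : Set (Set X) → Set (Set X),
    (∀ U, _root_.IsOpenCover U →
      _root_.IsOpenCover (r U) ∧ PointFinite (r U) ∧ Refines (r U) U) ∧
    (∀ U V, _root_.IsOpenCover U → _root_.IsOpenCover V → Refines U V → Refines (r U) (r V))

def MonotonicallyCountablyMetacompact (X : Type*) [TopologicalSpace X] : Prop :=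
  ∃ r : Set (Set X) → Set (Set X),
    (∀ U, _root_.IsOpenCover U → U.Countable →
      _root_.IsOpenCover (r U) ∧ PointFinite (r U) ∧ Refines (r U) U) ∧
    (∀ U V, _root_.IsOpenCover U → _root_.IsOpenCover V → U.Countable → V.Countable →
      Refines U V → Refines (r U) (r V))

def IsPerfectSpace (X : Type*) [TopologicalSpace X] : Prop :=
  ∀ C : Set X, IsClosed C → ∃ f : ℕ → Set X, (∀ n, IsOpen (f n)) ∧ C = ⋂ n, f n

def St {X : Type*} (x : X) (C : Set (Set X)) : Set X := ⋃₀ {G ∈ C | x ∈ G}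

def IsDevelopment {X : Type*} [TopologicalSpace X] (G : ℕ → Set (Set X)) : Prop :=
  (∀ n, _root_.IsOpenCover (G n)) ∧
  ∀ x : X, ∀ U : Set X, IsOpen U → x ∈ U → ∃ n, St x (G n) ⊆ U

def IsMooreSpace (X : Type*) [TopologicalSpace X] : Prop :=
  RegularSpace X ∧ T1Space X ∧ ∃ G : ℕ → Set (Set X), IsDevelopment G

def Metacompact (X : Type*) [TopologicalSpace X] : Prop :=
  ∀ U : Set (Set X), _root_.IsOpenCover U →
    ∃ V, _root_.IsOpenCover V ∧ PointFinite V ∧ Refines V U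

theorem stmt2 {X : Type*} [LinearOrder X] [TopologicalSpace X] [T2Space X]
    (B : Set (Set X)) (hB : IsTopologicalBasis B) (hBconv : ∀ b ∈ B, b.OrdConnected)
    (E : Set X) (hEc : IsClosed E) (hEd : DiscreteTopology ↥E)
    (S : Set X) (e : X → X) (he : ∀ x ∈ S, e x ∈ E ∧ x < e x)
    (hdisj : S.Pairwise fun x y => Disjoint (Set.Icc x (e x)) (Set.Icc y (e y)))
    (U : Set X) (hU : IsOpen U) (hUconv : U.OrdConnected)
    (hUE : (U ∩ E).Subsingleton) :
    {x ∈ S | (U ∩ Set.Icc x (e x)).Nonempty}.encard ≤ 3 := by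
  set T := {x ∈ S | (U ∩ Set.Icc x (e x)).Nonempty} with hT
  -- if x < y are both in T, then e x < y
  have key : ∀ x ∈ T, ∀ y ∈ T, x < y → e x < y := by
    intro x hx y hy hxy
    by_contra hle
    push_neg at hle
    have : y ∈ Set.Icc x (e x) ∩ Set.Icc y (e y) :=
      ⟨⟨hxy.le, hle⟩, ⟨le_refl y, (he y hy.1).2.le⟩⟩
    exact (hdisj hx.1 hy.1 hxy.ne).ne_of_mem this.1 this.2 rfl
  -- middle elements have e y ∈ U
  have mid : ∀ y ∈ T, (∃ x ∈ T, x < y) → (∃ z ∈ T, y < z) → e y ∈ U := by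
    rintro y hy ⟨x, hx, hxy⟩ ⟨z, hz, hyz⟩
    obtain ⟨u, huU, hu⟩ := hx.2
    obtain ⟨w, hwU, hw⟩ := hz.2
    have h1 : u ≤ e y := le_trans hu.2 (le_trans (key x hx y hy hxy).le (he y hy.1).2.le)
    have h2 : e y ≤ w := le_trans (key y hy z hz hyz).le hw.1
    exact hUconv.out huU hwU ⟨h1, h2⟩
  set M := {y ∈ T | (∃ x ∈ T, x < y) ∧ (∃ z ∈ T, y < z)} with hM
  set L := {y ∈ T | ∀ x ∈ T, y ≤ x} with hL
  set R := {y ∈ T | ∀ x ∈ T, x ≤ y} with hR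
  have hMsub : M.Subsingleton := by
    intro a ha b hb
    by_contra hab
    have hea : e a ∈ U ∩ E := ⟨mid a ha.1 ha.2.1 ha.2.2, (he a ha.1.1).1⟩
    have heb : e b ∈ U ∩ E := ⟨mid b hb.1 hb.2.1 hb.2.2, (he b hb.1.1).1⟩
    have heq := hUE hea heb
    have : e a ∈ Set.Icc a (e a) ∩ Set.Icc b (e b) := by
      refine ⟨⟨(he a ha.1.1).2.le, le_refl _⟩, ?_⟩
      rw [heq]; exact ⟨(he b hb.1.1).2.le, le_refl _⟩
    exact (hdisj ha.1.1 hb.1.1 hab).ne_of_mem this.1 this.2 rfl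
  have hLsub : L.Subsingleton := fun a ha b hb =>
    le_antisymm (ha.2 b hb.1) (hb.2 a ha.1)
  have hRsub : R.Subsingleton := fun a ha b hb =>
    le_antisymm (hb.2 a ha.1) (ha.2 b hb.1)
  have hTsub : T ⊆ M ∪ L ∪ R := by
    intro y hy
    by_cases h1 : ∃ x ∈ T, x < y
    · by_cases h2 : ∃ z ∈ T, y < z
      · exact Or.inl (Or.inl ⟨hy, h1, h2⟩)
      · push_neg at h2
        exact Or.inr ⟨hy, fun x hx => h2 x hx⟩
    · push_neg at h1
      exact Or.inl (Or.inr ⟨hy, fun x hx => h1 x hx⟩)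
  calc T.encard ≤ (M ∪ L ∪ R).encard := Set.encard_mono hTsub
    _ ≤ (M ∪ L).encard + R.encard := Set.encard_union_le _ _
    _ ≤ M.encard + L.encard + R.encard := by
        gcongr; exact Set.encard_union_le _ _
    _ ≤ 1 + 1 + 1 := by
        gcongr <;> [exact Set.encard_le_one_iff.mpr fun a b ha hb => hMsub ha hb;
          exact Set.encard_le_one_iff.mpr fun a b ha hb => hLsub ha hb; exact Set.encard_le_one_iff.mpr fun a b ha hb => hRsub ha hb]
    _ = 3 := by norm_num
end

section
/- Let X be a GO-space, E a closed discrete subset, S ⊆ X, and e : S → E with x < e(x) for all x ∈ S such that the intervals [x, e(x)], x ∈ S, are pairwise disjoint. Then S is a closed discrete subset of X. -/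
open Set TopologicalSpace

theorem stmt3 {X : Type*} [LinearOrder X] [TopologicalSpace X] [T2Space X]
    (B : Set (Set X)) (hB : IsTopologicalBasis B) (hBconv : ∀ b ∈ B, b.OrdConnected)
    (E : Set X) (hEc : IsClosed E) (hEd : DiscreteTopology ↥E)
    (S : Set X) (e : X → X) (he : ∀ x ∈ S, e x ∈ E ∧ x < e x)
    (hdisj : S.Pairwise fun x y => Disjoint (Set.Icc x (e x)) (Set.Icc y (e y))) :
    IsClosed S ∧ DiscreteTopology ↥S := by
  -- Key: every point has an open neighborhood meeting S in at most itself
  have key : ∀ z : X, ∃ U : Set X, IsOpen U ∧ z ∈ U ∧ U ∩ S ⊆ {z} := by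
    intro z
    -- first an open set meeting E in at most z
    obtain ⟨W, hWo, hzW, hWE⟩ : ∃ W, IsOpen W ∧ z ∈ W ∧ W ∩ E ⊆ {z} := by
      by_cases hz : z ∈ E
      · have h1 : IsOpen ({⟨z, hz⟩} : Set E) := isOpen_discrete _
        rw [isOpen_induced_iff] at h1
        obtain ⟨t, hto, ht⟩ := h1
        refine ⟨t, hto, ?_, ?_⟩
        · have : (⟨z, hz⟩ : E) ∈ (Subtype.val ⁻¹' t : Set E) := by
            rw [ht]; rfl
          exact this
        · rintro w ⟨hwt, hwE⟩
          have : (⟨w, hwE⟩ : E) ∈ (Subtype.val ⁻¹' t : Set E) := hwt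
          rw [ht] at this
          simpa using congrArg Subtype.val this
      · exact ⟨Eᶜ, hEc.isOpen_compl, hz, fun w hw => absurd hw.2 hw.1⟩
    obtain ⟨b, hb, hzb, hbW⟩ := hB.exists_subset_of_mem_open hzW hWo
    have hconv := hBconv b hb
    -- if x < y in S, then e x < y
    have hlt : ∀ x ∈ S, ∀ y ∈ S, x < y → e x < y := by
      intro x hx y hy hxy
      by_contra h
      push_neg at h
      have hd := hdisj hx hy hxy.ne
      exact (hd.ne_of_mem ⟨hxy.le, h⟩ ⟨le_rfl, (he y hy).2.le⟩) rfl
    set T := b ∩ S with hTdef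
    -- if x < y in T then e x = z
    have hkey2 : ∀ x ∈ T, ∀ y ∈ T, x < y → e x = z := by
      intro x hx y hy hxy
      have hex := he x hx.2
      have hlt' := hlt x hx.2 y hy.2 hxy
      have hexb : e x ∈ b := hconv.out hx.1 hy.1 ⟨hex.2.le, hlt'.le⟩
      exact hWE ⟨hbW hexb, hex.1⟩
    -- no 3-chain in T
    have hT3 : ∀ x ∈ T, ∀ y ∈ T, ∀ w ∈ T, x < y → y < w → False := by
      intro x hx y hy w hw hxy hyw
      have h1 := hkey2 x hx y hy hxy
      have h2 := hkey2 y hy w hw hyw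
      have := hlt x hx.2 y hy.2 hxy
      have hy2 := (he y hy.2).2
      exact absurd (this.trans hy2) (by rw [h1, h2]; exact lt_irrefl z)
    have hfin : T.Finite := by
      by_cases hsub : T.Subsingleton
      · exact hsub.finite
      · rw [Set.not_subsingleton_iff] at hsub
        obtain ⟨x, hx, y, hy, hxy⟩ := hsub
        have main : ∀ x ∈ T, ∀ y ∈ T, x < y → T ⊆ {x, y} := by
          intro x hx y hy hxy w hw
          by_contra hww
          simp only [Set.mem_insert_iff, Set.mem_singleton_iff, not_or] at hww
          rcases lt_trichotomy w x with h | h | h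
          · exact hT3 w hw x hx y hy h hxy
          · exact hww.1 h
          · rcases lt_trichotomy w y with h' | h' | h'
            · exact hT3 x hx w hw y hy h h'
            · exact hww.2 h'
            · exact hT3 x hx y hy w hw hxy h'
        rcases hxy.lt_or_gt with h | h
        · exact ((Set.finite_singleton y).insert x).subset (main x hx y hy h)
        · exact ((Set.finite_singleton x).insert y).subset (main y hy x hx h)
    -- remove points of T other than z
    have hfin' : (T \ {z}).Finite := hfin.diff
    refine ⟨b ∩ ⋂ s ∈ T \ {z}, {s}ᶜ, ?_, ?_, ?_⟩
    · exact hb |> hB.isOpen |>.inter (hfin'.isOpen_biInter fun s _ => isOpen_compl_singleton)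
    · refine ⟨hzb, ?_⟩
      rw [Set.mem_iInter₂]
      intro s hs
      exact fun h => hs.2 (by simpa using h.symm)
    · rintro t ⟨⟨htb, htI⟩, htS⟩
      by_contra htz
      have : t ∈ T \ {z} := ⟨⟨htb, htS⟩, htz⟩
      rw [Set.mem_iInter₂] at htI
      exact htI t this rfl
  constructor
  · rw [← isOpen_compl_iff, isOpen_iff_forall_mem_open]
    intro z hz
    obtain ⟨U, hUo, hzU, hUS⟩ := key z
    refine ⟨U, fun t ht hts => hz ?_, hUo, hzU⟩
    have := hUS ⟨ht, hts⟩
    rw [Set.mem_singleton_iff] at this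
    rwa [← this]
  · rw [discreteTopology_iff_singleton_mem_nhds]
    intro s
    obtain ⟨U, hUo, hzU, hUS⟩ := key (s : X)
    have hmem : (Subtype.val ⁻¹' U : Set S) ∈ nhds s :=
      (hUo.preimage continuous_subtype_val).mem_nhds hzU
    refine Filter.mem_of_superset hmem ?_
    intro t ht
    have := hUS ⟨ht, t.2⟩
    exact Subtype.ext this
end

section
/- Every metrizable space is monotonically metacompact: there is an operator r assigning to each open cover U a point-finite open refinement r(U) covering the space, such that if every member of U is contained in some member of V, then every member of r(U) is contained in some member of r(V). -/
open Set TopologicalSpace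

section MetricAux

variable {X : Type*} [MetricSpace X]

/-- Step: from any open cover, produce a point-finite open refinement whose
members are contained in a `2*δ`-ball around each of their points. -/
lemma step_lemma (W : Set (Set X)) (hWo : ∀ U ∈ W, IsOpen U)
    (hWc : ⋃₀ W = univ) (δ : ℝ) (hδ : 0 < δ) :
    ∃ C : Set (Set X), (∀ U ∈ C, IsOpen U) ∧ ⋃₀ C = univ ∧ PointFinite C ∧
      (∀ A ∈ C, ∃ B ∈ W, A ⊆ B) ∧ (∀ A ∈ C, ∀ x ∈ A, A ⊆ Metric.ball x (2 * δ)) := by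
  classical
  set u : X × Set X → Set X :=
    fun p => if p.2 ∈ W ∧ p.1 ∈ p.2 then Metric.ball p.1 δ ∩ p.2 else ∅ with hu
  have uo : ∀ p, IsOpen (u p) := by
    intro p
    by_cases h : p.2 ∈ W ∧ p.1 ∈ p.2
    · simp only [hu, if_pos h]; exact Metric.isOpen_ball.inter (hWo _ h.1)
    · simp [hu, if_neg h]
  have uc : ⋃ p, u p = univ := by
    apply eq_univ_of_forall
    intro x
    have hx : x ∈ ⋃₀ W := by rw [hWc]; trivial
    obtain ⟨A, hA, hxA⟩ := hx
    refine mem_iUnion.2 ⟨(x, A), ?_⟩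
    simp only [hu, if_pos (show A ∈ W ∧ x ∈ A from ⟨hA, hxA⟩)]
    exact ⟨Metric.mem_ball_self hδ, hxA⟩
  obtain ⟨v, vo, vc, vlf, vu⟩ := precise_refinement u uo uc
  refine ⟨{s | (∃ p, v p = s) ∧ s.Nonempty}, ?_, ?_, ?_, ?_, ?_⟩
  · rintro U ⟨⟨p, rfl⟩, -⟩; exact vo p
  · apply eq_univ_of_forall
    intro x
    have : x ∈ ⋃ p, v p := vc ▸ mem_univ x
    obtain ⟨p, hp⟩ := mem_iUnion.1 this
    exact ⟨v p, ⟨⟨p, rfl⟩, ⟨x, hp⟩⟩, hp⟩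
  · intro x
    have : {U ∈ {s | (∃ p, v p = s) ∧ s.Nonempty} | x ∈ U} ⊆ v '' {p | x ∈ v p} := by
      rintro U ⟨⟨⟨p, rfl⟩, -⟩, hxU⟩
      exact ⟨p, hxU, rfl⟩
    exact ((vlf.point_finite x).image v).subset this
  · rintro A ⟨⟨p, rfl⟩, hne⟩
    have hsub := vu p
    have hcond : p.2 ∈ W ∧ p.1 ∈ p.2 := by
      by_contra h
      simp only [hu, if_neg h] at hsub
      exact hne.ne_empty (subset_empty_iff.1 hsub)
    refine ⟨p.2, hcond.1, ?_⟩
    intro y hy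
    have := hsub hy
    simp only [hu, if_pos hcond] at this
    exact this.2
  · rintro A ⟨⟨p, rfl⟩, hne⟩ x hx y hy
    have hcond : p.2 ∈ W ∧ p.1 ∈ p.2 := by
      by_contra h
      have hsub := vu p
      simp only [hu, if_neg h] at hsub
      exact hne.ne_empty (subset_empty_iff.1 hsub)
    have hsub := vu p
    simp only [hu, if_pos hcond] at hsub
    have hx' : dist x p.1 < δ := (hsub hx).1
    have hy' : dist y p.1 < δ := (hsub hy).1
    have : dist y x < 2 * δ := by
      calc dist y x ≤ dist y p.1 + dist p.1 x := dist_triangle _ _ _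
        _ < δ + δ := by rw [dist_comm p.1 x]; exact add_lt_add hy' hx'
        _ = 2 * δ := by ring
    exact Metric.mem_ball.2 this

/-- The good-cover sequence. -/
lemma seq_lemma :
    ∃ G : ℕ → Set (Set X),
      (∀ n, (∀ U ∈ G n, IsOpen U) ∧ ⋃₀ G n = univ ∧ PointFinite (G n) ∧
        (∀ A ∈ G n, ∀ x ∈ A, A ⊆ Metric.ball x (2 * (1/2 : ℝ) ^ n))) ∧
      ∀ n, Refines (G (n+1)) (G n) := by
  classical
  set Q : ℕ → Set (Set X) → Prop := fun n C =>
    (∀ U ∈ C, IsOpen U) ∧ ⋃₀ C = univ ∧ PointFinite C ∧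
      (∀ A ∈ C, ∀ x ∈ A, A ⊆ Metric.ball x (2 * (1/2 : ℝ) ^ n)) with hQ
  have base : ∃ C, Q 0 C := by
    obtain ⟨C, h1, h2, h3, _, h5⟩ := step_lemma (X := X) {univ}
      (by rintro U rfl; exact isOpen_univ) (by simp) 1 one_pos
    exact ⟨C, h1, h2, h3, by simpa using h5⟩
  have step : ∀ n C, Q n C → ∃ C', Q (n+1) C' ∧ Refines C' C := by
    intro n C hC
    obtain ⟨C', h1, h2, h3, h4, h5⟩ := step_lemma C hC.1 hC.2.1 ((1/2 : ℝ) ^ (n+1))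
      (by positivity)
    exact ⟨C', ⟨h1, h2, h3, h5⟩, h4⟩
  obtain ⟨C0, hC0⟩ := base
  choose! F hF1 hF2 using step
  let G : ℕ → Set (Set X) := fun n => Nat.rec C0 (fun n ih => F n ih) n
  have hG : ∀ n, Q n (G n) := by
    intro n
    induction n with
    | zero => exact hC0
    | succ n ih => exact hF1 n _ ih
  exact ⟨G, hG, fun n => hF2 n _ (hG n)⟩

theorem metric_mono_metacompact : MonotonicallyMetacompact X := by
  classical
  obtain ⟨G, hG, hGr⟩ := seq_lemma (X := X)
  -- chained refinement
  have chain : ∀ m n, m ≤ n → Refines (G n) (G m) := by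
    intro m n h
    induction h with
    | refl => exact fun U hU => ⟨U, hU, subset_rfl⟩
    | @step k hk ih =>
        intro U hU
        obtain ⟨B, hB, hUB⟩ := hGr k U hU
        obtain ⟨B', hB', hBB'⟩ := ih B hB
        exact ⟨B', hB', hUB.trans hBB'⟩
  set Fits : Set (Set X) → Set X → Prop := fun U A => ∃ B ∈ U, A ⊆ B with hFitsDef
  set r : Set (Set X) → Set (Set X) := fun U =>
    { A | ∃ n, A ∈ G n ∧ Fits U A ∧ ∀ m < n, ∀ B ∈ G m, A ⊆ B → ¬ Fits U B } with hr
  -- key level lemma: big enough levels always fit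
  have exists_level : ∀ U : Set (Set X), IsOpenCover U → ∀ x : X,
      ∃ N, ∀ B ∈ G N, x ∈ B → Fits U B := by
    intro U hU x
    have hx : x ∈ ⋃₀ U := hU.2 ▸ mem_univ x
    obtain ⟨U0, hU0, hxU0⟩ := hx
    obtain ⟨ε, hε, hball⟩ := Metric.isOpen_iff.1 (hU.1 _ hU0) x hxU0
    obtain ⟨N, hN⟩ := exists_pow_lt_of_lt_one (half_pos hε) (by norm_num : (1/2 : ℝ) < 1)
    refine ⟨N, fun B hB hxB => ⟨U0, hU0, ?_⟩⟩
    have h1 := (hG N).2.2.2 B hB x hxB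
    refine h1.trans (subset_trans (Metric.ball_subset_ball ?_) hball)
    have h2 : (1/2:ℝ)^N < ε/2 := hN
    linarith
  refine ⟨r, ?_, ?_⟩
  · -- open cover, point-finite, refines
    intro U hU
    refine ⟨⟨?_, ?_⟩, ?_, ?_⟩
    · rintro A ⟨n, hAn, -, -⟩
      exact (hG n).1 A hAn
    · -- covers
      apply eq_univ_of_forall
      intro x
      have hSne : ∃ n, ∃ A ∈ G n, x ∈ A ∧ Fits U A := by
        obtain ⟨N, hN⟩ := exists_level U hU x
        have hx : x ∈ ⋃₀ G N := (hG N).2.1 ▸ mem_univ x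
        obtain ⟨A, hA, hxA⟩ := hx
        exact ⟨N, A, hA, hxA, hN A hA hxA⟩
      set S : Set ℕ := {n | ∃ A ∈ G n, x ∈ A ∧ Fits U A} with hS
      have hne : S.Nonempty := hSne
      obtain ⟨A, hA, hxA, hFA⟩ := Nat.sInf_mem hne
      refine ⟨A, ⟨sInf S, hA, hFA, ?_⟩, hxA⟩
      intro m hm B hB hAB hFB
      exact Nat.notMem_of_lt_sInf hm ⟨B, hB, hAB hxA, hFB⟩
    · -- point-finite
      intro x
      obtain ⟨N, hN⟩ := exists_level U hU x
      have hsub : {A ∈ r U | x ∈ A} ⊆ ⋃ n ∈ Iic N, {A ∈ G n | x ∈ A} := by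
        rintro A ⟨⟨n, hAn, hFA, hneg⟩, hxA⟩
        have hn : n ≤ N := by
          by_contra h
          push_neg at h
          obtain ⟨B, hB, hAB⟩ := chain N n h.le A hAn
          exact hneg N h B hB hAB (hN B hB (hAB hxA))
        exact mem_biUnion hn ⟨hAn, hxA⟩
      exact ((finite_Iic N).biUnion fun n _ => (hG n).2.2.1 x).subset hsub
    · -- refines
      rintro A ⟨n, -, hFA, -⟩
      exact hFA
  · -- monotone
    intro U V hU hV hUV A hA
    obtain ⟨n, hAn, hFA, -⟩ := hA
    have hFVA : Fits V A := by
      obtain ⟨U0, hU0, hAU0⟩ := hFA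
      obtain ⟨V0, hV0, hUV0⟩ := hUV U0 hU0
      exact ⟨V0, hV0, hAU0.trans hUV0⟩
    set S : Set ℕ := {m | ∃ B ∈ G m, A ⊆ B ∧ Fits V B} with hS
    have hne : S.Nonempty := ⟨n, A, hAn, subset_rfl, hFVA⟩
    obtain ⟨B, hBm, hAB, hFB⟩ := Nat.sInf_mem hne
    refine ⟨B, ⟨sInf S, hBm, hFB, ?_⟩, hAB⟩
    intro m' hm' B' hB' hBB' hFB'
    exact Nat.notMem_of_lt_sInf hm' ⟨B', hB', hAB.trans hBB', hFB'⟩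

end MetricAux

theorem stmt4 {X : Type*} [TopologicalSpace X] [MetrizableSpace X] :
    MonotonicallyMetacompact X := by
  letI : MetricSpace X := TopologicalSpace.metrizableSpaceMetric X
  exact metric_mono_metacompact
end

section
/- If X is a metric space (or a metacompact Moore space), S ⊆ X, and X^S is the space with topology generated by the open sets of X together with {x} for each x ∈ S, then X^S is monotonically metacompact. -/
open Set TopologicalSpace

open Topology

set_option linter.unusedSectionVars false

namespace Stmt7Aux

variable {X : Type*}

def Qp (F : ℕ → Set (Set X)) (n : ℕ) (x : X) (U : Set (Set X)) : Prop :=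
  ∀ H ∈ F n, x ∈ H → ∃ U' ∈ U, H ⊆ U'

def r1 (F : ℕ → Set (Set X)) (U : Set (Set X)) : Set (Set X) :=
  {H | ∃ n, H ∈ F n ∧ (∃ x ∈ H, Qp F n x U) ∧ ∀ z ∈ H, ∀ k, k < n → ¬ Qp F k z U}

def rOp (S : Set X) (F : ℕ → Set (Set X)) (U : Set (Set X)) : Set (Set X) :=
  r1 F U ∪ (fun x => ({x} : Set X)) '' S

lemma Qp_mono {F : ℕ → Set (Set X)} {n x} {U V : Set (Set X)}
    (h : Refines U V) (hQ : Qp F n x U) : Qp F n x V := by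
  intro H hH hx
  obtain ⟨U', hU', hsub⟩ := hQ H hH hx
  obtain ⟨V', hV', hsub'⟩ := h U' hU'
  exact ⟨V', hV', hsub.trans hsub'⟩

lemma anc {F : ℕ → Set (Set X)} (hnest : ∀ n, Refines (F (n+1)) (F n)) :
    ∀ n m H, m ≤ n → H ∈ F n → ∃ K ∈ F m, H ⊆ K := by
  intro n
  induction n with
  | zero => intro m H hm hH; exact ⟨H, by simpa [Nat.le_zero.mp hm] using hH, subset_rfl⟩
  | succ n ih =>
    intro m H hm hH
    rcases Nat.lt_or_ge m (n+1) with h | h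
    · obtain ⟨K', hK', hHK'⟩ := hnest n H hH
      obtain ⟨K, hK, hK'K⟩ := ih m K' (Nat.lt_succ_iff.mp h) hK'
      exact ⟨K, hK, hHK'.trans hK'K⟩
    · have : m = n + 1 := le_antisymm hm h
      exact ⟨H, this ▸ hH, subset_rfl⟩

lemma descent {F : ℕ → Set (Set X)} (hnest : ∀ n, Refines (F (n+1)) (F n))
    (U : Set (Set X)) :
    ∀ m n H, H ∈ F n → m ≤ n → ∀ x ∈ H, Qp F m x U → (∀ k, k < m → ¬ Qp F k x U) →
      ∃ K ∈ r1 F U, H ⊆ K := by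
  intro m
  induction m using Nat.strong_induction_on with
  | _ m ih =>
    intro n H hHn hmn x hxH hQ hmin
    obtain ⟨K₀, hK₀m, hHK₀⟩ := anc hnest n m H hmn hHn
    by_cases hall : ∀ z ∈ K₀, ∀ k, k < m → ¬ Qp F k z U
    · exact ⟨K₀, ⟨m, hK₀m, ⟨x, hHK₀ hxH, hQ⟩, hall⟩, hHK₀⟩
    · push_neg at hall
      obtain ⟨z, hz, k, hk, hQk⟩ := hall
      have hne : {j | Qp F j z U}.Nonempty := ⟨k, hQk⟩
      have hm'Q : Qp F (sInf {j | Qp F j z U}) z U := Nat.sInf_mem hne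
      have hm'le : sInf {j | Qp F j z U} ≤ k := Nat.sInf_le hQk
      have hm'min : ∀ j, j < sInf {j | Qp F j z U} → ¬ Qp F j z U :=
        fun j hj => Nat.notMem_of_lt_sInf hj
      obtain ⟨K, hK, hK₀K⟩ := ih (sInf {j | Qp F j z U}) (lt_of_le_of_lt hm'le hk)
        m K₀ hK₀m (le_of_lt (lt_of_le_of_lt hm'le hk)) z hz hm'Q hm'min
      exact ⟨K, hK, hHK₀.trans hK₀K⟩


variable [t : TopologicalSpace X]

def meet (A B : Set (Set X)) : Set (Set X) := {W | ∃ a ∈ A, ∃ b ∈ B, W = a ∩ b}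

lemma meet_isOpenCover {A B : Set (Set X)} (hA : IsOpenCover A) (hB : IsOpenCover B) :
    IsOpenCover (meet A B) := by
  constructor
  · rintro W ⟨a, ha, b, hb, rfl⟩
    exact (hA.1 a ha).inter (hB.1 b hb)
  · apply eq_univ_of_forall
    intro x
    have hxa : x ∈ ⋃₀ A := hA.2 ▸ mem_univ x
    have hxb : x ∈ ⋃₀ B := hB.2 ▸ mem_univ x
    obtain ⟨a, ha, hxa⟩ := hxa
    obtain ⟨b, hb, hxb⟩ := hxb
    exact ⟨a ∩ b, ⟨a, ha, b, hb, rfl⟩, hxa, hxb⟩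

lemma meet_refines_left (A B : Set (Set X)) : Refines (meet A B) A := by
  rintro W ⟨a, ha, b, hb, rfl⟩
  exact ⟨a, ha, inter_subset_left⟩

lemma meet_refines_right (A B : Set (Set X)) : Refines (meet A B) B := by
  rintro W ⟨a, ha, b, hb, rfl⟩
  exact ⟨b, hb, inter_subset_right⟩

lemma refines_trans {A B C : Set (Set X)} (h1 : Refines A B) (h2 : Refines B C) :
    Refines A C := by
  intro a ha
  obtain ⟨b, hb, hab⟩ := h1 a ha
  obtain ⟨c, hc, hbc⟩ := h2 b hb
  exact ⟨c, hc, hab.trans hbc⟩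

lemma buildF (hmc : Metacompact X) (G : ℕ → Set (Set X)) (hG : ∀ n, IsOpenCover (G n)) :
    ∃ F : ℕ → Set (Set X), (∀ n, IsOpenCover (F n)) ∧ (∀ n, PointFinite (F n)) ∧
      (∀ n, Refines (F (n+1)) (F n)) ∧ (∀ n, Refines (F n) (G n)) := by
  choose! V hV1 hV2 hV3 using hmc
  let F : ℕ → Set (Set X) := fun n =>
    Nat.rec (V (G 0)) (fun n Fn => V (meet Fn (G (n+1)))) n
  have hFcov : ∀ n, IsOpenCover (F n) := by
    intro n
    induction n with
    | zero => exact hV1 _ (hG 0)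
    | succ n ih => exact hV1 _ (meet_isOpenCover ih (hG (n+1)))
  refine ⟨F, hFcov, ?_, ?_, ?_⟩
  · intro n
    cases n with
    | zero => exact hV2 _ (hG 0)
    | succ n => exact hV2 _ (meet_isOpenCover (hFcov n) (hG (n+1)))
  · intro n
    exact refines_trans (hV3 _ (meet_isOpenCover (hFcov n) (hG (n+1))))
      (meet_refines_left _ _)
  · intro n
    induction n with
    | zero => exact hV3 _ (hG 0)
    | succ n ih =>
      exact refines_trans (hV3 _ (meet_isOpenCover (hFcov n) (hG (n+1))))
        (meet_refines_right _ _)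

-- from a development, turn `St`-control into member control
lemma dev_control {G F : ℕ → Set (Set X)}
    (hdev : ∀ x : X, ∀ U : Set X, IsOpen U → x ∈ U → ∃ n, St x (G n) ⊆ U)
    (href : ∀ n, Refines (F n) (G n)) :
    ∀ (x : X) (O : Set X), IsOpen O → x ∈ O → ∃ n, ∀ H ∈ F n, x ∈ H → H ⊆ O := by
  intro x O hO hxO
  obtain ⟨n, hn⟩ := hdev x O hO hxO
  refine ⟨n, fun H hH hxH => ?_⟩
  obtain ⟨g, hg, hHg⟩ := href n H hH
  have hgSt : g ⊆ St x (G n) :=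
    subset_sUnion_of_mem (show g ∈ {G' ∈ G n | x ∈ G'} from ⟨hg, hHg hxH⟩)
  exact (hHg.trans hgSt).trans hn

-- metric: metacompactness
lemma metacompact_of_paracompact [ParacompactSpace X] : Metacompact X := by
  intro U hU
  obtain ⟨v, hvo, hvU, hvlf, hvsub⟩ := precise_refinement (fun i : U => (i : Set X))
    (fun i => hU.1 i i.2) (by rw [← sUnion_eq_iUnion]; exact hU.2)
  refine ⟨range v, ⟨?_, ?_⟩, ?_, ?_⟩
  · rintro W ⟨i, rfl⟩; exact hvo i
  · rw [sUnion_range]; exact hvU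
  · intro x
    have : {W ∈ range v | x ∈ W} ⊆ (fun i => v i) '' {i | x ∈ v i} := by
      rintro W ⟨⟨i, rfl⟩, hxW⟩
      exact ⟨i, hxW, rfl⟩
    exact ((hvlf.point_finite x).image _).subset this
  · rintro W ⟨i, rfl⟩
    exact ⟨(i : Set X), i.2, hvsub i⟩

-- metric: development from balls
lemma metric_dev {Y : Type*} [MetricSpace Y] :
    ∃ G : ℕ → Set (Set Y), (∀ n, IsOpenCover (G n)) ∧
      (∀ x : Y, ∀ U : Set Y, IsOpen U → x ∈ U → ∃ n, St x (G n) ⊆ U) := by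
  refine ⟨fun n => range (fun c : Y => Metric.ball c ((1/2 : ℝ)^n)), fun n => ⟨?_, ?_⟩, ?_⟩
  · rintro W ⟨c, rfl⟩; exact Metric.isOpen_ball
  · apply eq_univ_of_forall
    intro x
    exact ⟨Metric.ball x ((1/2)^n), ⟨x, rfl⟩, Metric.mem_ball_self (by positivity)⟩
  · intro x U hU hxU
    obtain ⟨ε, hε, hball⟩ := Metric.isOpen_iff.mp hU x hxU
    obtain ⟨n, hn⟩ := exists_pow_lt_of_lt_one (by positivity : (0:ℝ) < ε/2) (by norm_num : (1/2:ℝ) < 1)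
    refine ⟨n, ?_⟩
    rintro y ⟨W, ⟨⟨c, rfl⟩, hxW⟩, hyW⟩
    apply hball
    have h1 : dist y x < (1/2:ℝ)^n + (1/2:ℝ)^n := by
      calc dist y x ≤ dist y c + dist c x := dist_triangle _ _ _
        _ < (1/2:ℝ)^n + (1/2:ℝ)^n := by
            apply add_lt_add
            · exact Metric.mem_ball.mp hyW
            · exact Metric.mem_ball.mp (Metric.mem_ball'.mp hxW)
    have : (1/2:ℝ)^n + (1/2:ℝ)^n < ε := by linarith
    exact Metric.mem_ball.mpr (lt_trans h1 this)


theorem key (S : Set X) (F : ℕ → Set (Set X))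
    (hcov : ∀ n, IsOpenCover (F n))
    (hpf : ∀ n, PointFinite (F n))
    (hnest : ∀ n, Refines (F (n+1)) (F n))
    (hdev : ∀ (x : X) (O : Set X), IsOpen O → x ∈ O →
      ∃ n, ∀ H ∈ F n, x ∈ H → H ⊆ O) :
    @MonotonicallyMetacompact X
      (generateFrom ({U : Set X | IsOpen U} ∪ (fun x => ({x} : Set X)) '' S)) := by
  set g : Set (Set X) := {U : Set X | IsOpen U} ∪ (fun x => ({x} : Set X)) '' S with hg
  -- basic facts about the generated topology
  have hμτ : ∀ V : Set X, IsOpen[t] V → IsOpen[generateFrom g] V := fun V hV =>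
    TopologicalSpace.GenerateOpen.basic V (Or.inl hV)
  have hsing : ∀ x ∈ S, IsOpen[generateFrom g] ({x} : Set X) := fun x hx =>
    TopologicalSpace.GenerateOpen.basic _ (Or.inr ⟨x, hx, rfl⟩)
  have hint : ∀ W : Set X, IsOpen[generateFrom g] W → ∀ x ∈ W, x ∉ S →
      ∃ V : Set X, IsOpen[t] V ∧ x ∈ V ∧ V ⊆ W := by
    intro W hW
    have hW' : TopologicalSpace.GenerateOpen g W := hW
    clear hW
    induction hW' with
    | basic s hs =>
      intro x hx hxS
      rcases hs with hs | ⟨y, hyS, heq⟩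
      · exact ⟨s, hs, hx, subset_rfl⟩
      · exfalso
        apply hxS
        rw [← heq] at hx
        simp only [mem_singleton_iff] at hx
        exact hx ▸ hyS
    | univ => exact fun x _ _ => ⟨univ, isOpen_univ, trivial, subset_rfl⟩
    | inter s₁ s₂ _ _ ih₁ ih₂ =>
      intro x hx hxS
      obtain ⟨V₁, hV₁, hxV₁, hV₁s⟩ := ih₁ x hx.1 hxS
      obtain ⟨V₂, hV₂, hxV₂, hV₂s⟩ := ih₂ x hx.2 hxS
      exact ⟨V₁ ∩ V₂, hV₁.inter hV₂, ⟨hxV₁, hxV₂⟩, inter_subset_inter hV₁s hV₂s⟩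
    | sUnion 𝒮 _ ih =>
      intro x hx hxS
      obtain ⟨s, hs, hxs⟩ := hx
      obtain ⟨V, hV, hxV, hVs⟩ := ih s hs x hxs hxS
      exact ⟨V, hV, hxV, hVs.trans (subset_sUnion_of_mem hs)⟩
  -- for non-S points covered by a τ-cover, some level works
  have hQex : ∀ (U : Set (Set X)), @IsOpenCover X (generateFrom g) U → ∀ y : X, y ∉ S →
      ∃ n, Qp F n y U := by
    intro U hU y hyS
    have : y ∈ ⋃₀ U := hU.2 ▸ mem_univ y
    obtain ⟨U', hU', hyU'⟩ := this
    obtain ⟨V, hV, hyV, hVU'⟩ := hint U' (hU.1 U' hU') y hyU' hyS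
    obtain ⟨n, hn⟩ := hdev y V hV hyV
    exact ⟨n, fun H hH hyH => ⟨U', hU', (hn H hH hyH).trans hVU'⟩⟩
  refine ⟨rOp S F, ?_, ?_⟩
  · intro U hU
    have hcover : ∀ y : X, ∃ K ∈ rOp S F U, y ∈ K := by
      intro y
      by_cases hy : ∃ n, Qp F n y U
      · have hne : {n | Qp F n y U}.Nonempty := hy
        have hQ : Qp F (sInf {n | Qp F n y U}) y U := Nat.sInf_mem hne
        have hmin : ∀ k, k < sInf {n | Qp F n y U} → ¬ Qp F k y U :=
          fun k hk => Nat.notMem_of_lt_sInf hk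
        have : y ∈ ⋃₀ F (sInf {n | Qp F n y U}) := (hcov _).2 ▸ mem_univ y
        obtain ⟨H, hH, hyH⟩ := this
        obtain ⟨K, hK, hHK⟩ := descent hnest U _ _ H hH le_rfl y hyH hQ hmin
        exact ⟨K, Or.inl hK, hHK hyH⟩
      · have hyS : y ∈ S := by
          by_contra hyS
          exact hy (hQex U hU y hyS)
        exact ⟨{y}, Or.inr ⟨y, hyS, rfl⟩, rfl⟩
    refine ⟨⟨?_, ?_⟩, ?_, ?_⟩
    · rintro W (⟨n, hWn, -, -⟩ | ⟨x, hxS, rfl⟩)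
      · exact hμτ W ((hcov n).1 W hWn)
      · exact hsing x hxS
    · apply eq_univ_of_forall
      intro y
      obtain ⟨K, hK, hyK⟩ := hcover y
      exact ⟨K, hK, hyK⟩
    · -- PointFinite
      intro y
      by_cases hne : ∃ W, W ∈ r1 F U ∧ y ∈ W
      · obtain ⟨H₀, ⟨n₀, hH₀n₀, ⟨x₀, hx₀, hQ₀⟩, -⟩, hyH₀⟩ := hne
        obtain ⟨U'₀, hU'₀, hH₀U'₀⟩ := hQ₀ H₀ hH₀n₀ hx₀
        obtain ⟨N, hN⟩ := hdev y H₀ ((hcov n₀).1 H₀ hH₀n₀) hyH₀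
        have hQN : Qp F N y U := fun K hK hyK => ⟨U'₀, hU'₀, (hN K hK hyK).trans hH₀U'₀⟩
        have hsub : {W | W ∈ rOp S F U ∧ y ∈ W} ⊆
            insert ({y} : Set X) (⋃ n ∈ Iic N, {H | H ∈ F n ∧ y ∈ H}) := by
          rintro W ⟨(⟨n, hWn, -, hminW⟩ | ⟨x, hxS, rfl⟩), hyW⟩
          · have hnN : n ≤ N := by
              by_contra hlt
              exact hminW y hyW N (lt_of_not_ge hlt) hQN
            exact Or.inr (mem_biUnion hnN ⟨hWn, hyW⟩)
          · left
            simp only [mem_singleton_iff] at hyW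
            simp [hyW]
        refine Set.Finite.subset ?_ hsub
        refine (Set.Finite.biUnion (finite_Iic N) (fun n _ => ?_)).insert _
        exact (hpf n y).subset (fun H hH => ⟨hH.1, hH.2⟩)
      · have hsub : {W | W ∈ rOp S F U ∧ y ∈ W} ⊆ {({y} : Set X)} := by
          rintro W ⟨(hW | ⟨x, hxS, rfl⟩), hyW⟩
          · exact absurd ⟨W, hW, hyW⟩ hne
          · simp only [mem_singleton_iff] at hyW
            simp [hyW]
        exact (finite_singleton _).subset hsub
    · -- Refines (rOp) U
      rintro W (⟨n, hWn, ⟨x, hxW, hQ⟩, -⟩ | ⟨x, hxS, rfl⟩)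
      · exact hQ W hWn hxW
      · have : x ∈ ⋃₀ U := hU.2 ▸ mem_univ x
        obtain ⟨U', hU', hxU'⟩ := this
        exact ⟨U', hU', singleton_subset_iff.mpr hxU'⟩
  · -- monotonicity
    intro U V hU hV hUV W hW
    rcases hW with ⟨n, hWn, ⟨x, hxW, hQ⟩, -⟩ | ⟨x, hxS, rfl⟩
    · have hQV : Qp F n x V := Qp_mono hUV hQ
      have hne : {j | Qp F j x V}.Nonempty := ⟨n, hQV⟩
      have hQm : Qp F (sInf {j | Qp F j x V}) x V := Nat.sInf_mem hne
      have hmle : sInf {j | Qp F j x V} ≤ n := Nat.sInf_le hQV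
      have hmin : ∀ k, k < sInf {j | Qp F j x V} → ¬ Qp F k x V :=
        fun k hk => Nat.notMem_of_lt_sInf hk
      obtain ⟨K, hK, hWK⟩ := descent hnest V _ _ W hWn hmle x hxW hQm hmin
      exact ⟨K, Or.inl hK, hWK⟩
    · exact ⟨{x}, Or.inr ⟨x, hxS, rfl⟩, subset_rfl⟩


end Stmt7Aux

open Stmt7Aux Topology in
theorem stmt7 {X : Type*} [TopologicalSpace X]
    (h : MetrizableSpace X ∨ (IsMooreSpace X ∧ Metacompact X)) (S : Set X) :
    @MonotonicallyMetacompact X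
      (generateFrom ({U : Set X | IsOpen U} ∪ (fun x => ({x} : Set X)) '' S)) := by
  have main : ∀ (_ : Metacompact X) (G : ℕ → Set (Set X)),
      (∀ n, IsOpenCover (G n)) →
      (∀ x : X, ∀ U : Set X, IsOpen U → x ∈ U → ∃ n, St x (G n) ⊆ U) →
      @MonotonicallyMetacompact X
        (generateFrom ({U : Set X | IsOpen U} ∪ (fun x => ({x} : Set X)) '' S)) := by
    intro hmc G hGcov hGdev
    obtain ⟨F, hFcov, hFpf, hFnest, hFref⟩ := buildF hmc G hGcov
    exact key S F hFcov hFpf hFnest (dev_control hGdev hFref)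
  rcases h with hmet | ⟨⟨_, _, G, hGcov, hGdev⟩, hmc⟩
  · letI m : MetricSpace X := TopologicalSpace.metrizableSpaceMetric X
    obtain ⟨G, hGcov, hGdev⟩ := metric_dev (Y := X)
    exact main metacompact_of_paracompact G hGcov hGdev
  · exact main hmc G hGcov hGdev
end

section
/- The ordinal space [0, ω₁) with the order topology is not monotonically countably metacompact. -/
open Set TopologicalSpace

section Aux

open Cardinal Ordinal

universe uO

variable {X : Type*} [LinearOrder X] [TopologicalSpace X] [OrderTopology X]

private lemma aux_succ (e : X ≃o Set.Iio (Cardinal.aleph 1).ord) (γ : X) :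
    ∃ σ : X, γ < σ ∧ ∀ x : X, x ≤ γ ↔ x < σ := by
  have h2 : Order.succ ((e γ : Ordinal)) ∈ Set.Iio (Cardinal.aleph 1).ord :=
    (Cardinal.isSuccLimit_ord (Cardinal.aleph0_le_aleph 1)).succ_lt (e γ).2
  have hlt : ∀ (x : X) (y : Set.Iio (Cardinal.aleph 1).ord), x < e.symm y ↔ e x < y :=
    fun x y => by rw [lt_iff_not_ge, e.symm_apply_le, ← lt_iff_not_ge]
  refine ⟨e.symm ⟨_, h2⟩, ?_, fun x => ?_⟩
  · rw [hlt]
    exact_mod_cast Order.lt_succ (e γ : Ordinal)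
  · rw [hlt, ← Subtype.coe_lt_coe]
    show _ ↔ (e x : Ordinal) < Order.succ (e γ : Ordinal)
    rw [Order.lt_succ_iff, Subtype.coe_le_coe, e.le_iff_le]

private lemma aux_Iic_open (e : X ≃o Set.Iio (Cardinal.aleph 1).ord) (γ : X) :
    IsOpen (Set.Iic γ) := by
  obtain ⟨σ, -, hσ⟩ := aux_succ e γ
  have : Set.Iic γ = Set.Iio σ := Set.ext fun x => hσ x
  rw [this]; exact isOpen_Iio

private lemma aux_min (e : X ≃o Set.Iio (Cardinal.aleph 1).ord) (S : Set X)
    (hS : S.Nonempty) : ∃ m ∈ S, ∀ x ∈ S, m ≤ x := by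
  obtain ⟨x0, hx0⟩ := hS
  have hT : ((fun x : X => (e x : Ordinal)) '' S).Nonempty := ⟨_, ⟨x0, hx0, rfl⟩⟩
  obtain ⟨o, ⟨m, hm, rfl⟩, hmin⟩ := Ordinal.lt_wf.has_min _ hT
  refine ⟨m, hm, fun x hx => ?_⟩
  have h1 : ¬ ((e x : Ordinal) < (e m : Ordinal)) := hmin _ ⟨x, hx, rfl⟩
  have h2 : (e m : Ordinal) ≤ (e x : Ordinal) := not_lt.1 h1
  exact e.le_iff_le.mp (Subtype.coe_le_coe.mp h2)

private lemma aux_seq_bdd (e : X ≃o Set.Iio (Cardinal.aleph.{uO} 1).ord) (f : ℕ → X) :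
    ∃ b : X, ∀ n, f n ≤ b := by
  have h : ∀ i : ULift.{uO} ℕ, ((e (f i.down) : Ordinal)) < (Cardinal.aleph 1).ord :=
    fun i => (e (f i.down)).2
  have hs : (⨆ i, (fun i : ULift.{uO} ℕ => (e (f i.down) : Ordinal)) i) < (Cardinal.aleph 1).ord := by
    have ho := Cardinal.ord_aleph.{uO} 1
    exact (Ordinal.iSup_lt_omega_one (α := ULift.{uO} ℕ)
      (f := fun i : ULift.{uO} ℕ => (e (f i.down) : Ordinal)) fun i => (h i).trans_eq ho).trans_eq ho.symm
  refine ⟨e.symm ⟨_, hs⟩, fun n => ?_⟩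
  rw [OrderIso.le_symm_apply, ← Subtype.coe_le_coe]
  exact Ordinal.le_iSup (fun i : ULift.{uO} ℕ => (e (f i.down) : Ordinal)) (ULift.up n)

private lemma aux_ctble_bdd (e : X ≃o Set.Iio (Cardinal.aleph 1).ord) (S : Set X)
    (hS : S.Countable) : ∃ b : X, ∀ x ∈ S, x ≤ b := by
  rcases S.eq_empty_or_nonempty with rfl | hne
  · exact ⟨e.symm ⟨0, (Cardinal.isSuccLimit_ord (Cardinal.aleph0_le_aleph 1)).bot_lt⟩, fun x hx => absurd hx (by simp)⟩
  · obtain ⟨f, hf⟩ := hS.exists_eq_range hne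
    obtain ⟨b, hb⟩ := aux_seq_bdd e f
    exact ⟨b, fun x hx => by obtain ⟨n, rfl⟩ := hf ▸ hx; exact hb n⟩

private lemma aux_lub (e : X ≃o Set.Iio (Cardinal.aleph 1).ord) (f : ℕ → X) :
    ∃ m : X, (∀ n, f n ≤ m) ∧ ∀ b : X, (∀ n, f n ≤ b) → m ≤ b := by
  obtain ⟨b0, hb0⟩ := aux_seq_bdd e f
  obtain ⟨m, hm1, hm2⟩ := aux_min e {b : X | ∀ n, f n ≤ b} ⟨b0, hb0⟩
  exact ⟨m, hm1, fun b hb => hm2 b hb⟩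

private lemma aux_Iio_ctble (e : X ≃o Set.Iio (Cardinal.aleph 1).ord) (δ : X) :
    (Set.Iio δ).Countable := by
  have hcard : ((e δ : Ordinal)).card < Cardinal.aleph 1 := Cardinal.lt_ord.1 (e δ).2
  have hcard0 : ((e δ : Ordinal)).card ≤ Cardinal.aleph0 := by
    have hcard' : ((e δ : Ordinal)).card < Order.succ Cardinal.aleph0 := by
      rw [Cardinal.succ_aleph0]; exact hcard
    exact Order.lt_succ_iff.1 hcard'

  have h1 : #(Set.Iio (e δ : Ordinal)) ≤ Cardinal.aleph0 := by
    rw [Ordinal.mk_Iio_ordinal]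
    exact Cardinal.lift_le_aleph0.2 hcard0
  have h2 : Countable (Set.Iio (e δ : Ordinal)) := Cardinal.mk_le_aleph0_iff.1 h1
  have hinj : Function.Injective (fun x : Set.Iio δ =>
      (⟨(e x.1 : Ordinal), Subtype.coe_lt_coe.mpr (e.lt_iff_lt.2 x.2)⟩ :
        Set.Iio (e δ : Ordinal))) := by
    intro a b hab
    have : (e a.1 : Ordinal) = (e b.1 : Ordinal) :=
      congrArg (fun z : Set.Iio (e δ : Ordinal) => (z : Ordinal)) hab
    exact Subtype.ext (e.injective (Subtype.ext this))
  exact Set.countable_coe_iff.mp (Function.Injective.countable hinj)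

end Aux

theorem stmt9 {X : Type*} [LinearOrder X] [TopologicalSpace X] [OrderTopology X]
    (e : X ≃o Set.Iio (Cardinal.aleph 1).ord) :
    ¬ MonotonicallyCountablyMetacompact X := by
  rintro ⟨r, hr, hmono⟩
  classical
  set K : X → Set (Set X) := fun γ => {Set.Iic γ, Set.Ioi γ} with hK
  have hKopen : ∀ γ, IsOpenCover (K γ) := by
    intro γ
    constructor
    · intro U hU
      rcases hU with rfl | hU
      · exact aux_Iic_open e γ
      · rw [Set.mem_singleton_iff] at hU; subst hU; exact isOpen_Ioi
    · apply Set.eq_univ_of_forall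
      intro x
      rcases le_or_gt x γ with h | h
      · exact ⟨Set.Iic γ, Set.mem_insert _ _, h⟩
      · exact ⟨Set.Ioi γ, Set.mem_insert_of_mem _ rfl, h⟩
  have hKct : ∀ γ, (K γ).Countable := fun γ =>
    ((Set.finite_singleton _).insert _).countable
  have hrK := fun γ => hr (K γ) (hKopen γ) (hKct γ)
  have hWex : ∀ γ : X, ∃ W, W ∈ r (K γ) ∧ γ ∈ W := by
    intro γ
    have hcov := (hrK γ).1.2
    have hx : (γ : X) ∈ ⋃₀ r (K γ) := hcov ▸ Set.mem_univ γ
    obtain ⟨W, hW, hγW⟩ := hx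
    exact ⟨W, hW, hγW⟩
  choose W hWmem hWγ using hWex
  have hWIic : ∀ γ, W γ ⊆ Set.Iic γ := by
    intro γ
    obtain ⟨V, hV, hWV⟩ := (hrK γ).2.2 (W γ) (hWmem γ)
    rcases hV with rfl | hV
    · exact hWV
    · rw [Set.mem_singleton_iff] at hV; subst hV
      exact absurd (hWV (hWγ γ)) (lt_irrefl γ)
  have hgex : ∀ γ : X, ∃ b : X, (∃ c, c < γ) → b < γ ∧ Set.Ioc b γ ⊆ W γ := by
    intro γ
    by_cases h : ∃ c, c < γ
    · have hnhds : W γ ∈ nhds γ :=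
        ((hrK γ).1.1 (W γ) (hWmem γ)).mem_nhds (hWγ γ)
      obtain ⟨b, hb, hsub⟩ := exists_Ioc_subset_of_mem_nhds hnhds h
      exact ⟨b, fun _ => ⟨hb, hsub⟩⟩
    · exact ⟨γ, fun hc => absurd hc h⟩
  choose g hg using hgex
  by_cases hbdd : ∀ β : X, ∃ b : X, ∀ γ : X, ((∃ c, c < γ) ∧ g γ = β) → γ ≤ b
  · -- all fibers of g bounded: diagonal contradiction
    choose F hF using hbdd
    have step : ∀ x : X, ∃ y : X, x < y ∧ ∀ β ≤ x, F β ≤ y := by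
      intro x
      obtain ⟨σ, hσ1, hσ2⟩ := aux_succ e x
      have hIic : (Set.Iic x).Countable := by
        have hsub : Set.Iic x ⊆ Set.Iio σ := fun y hy => (hσ2 y).1 hy
        exact Set.Countable.mono hsub (aux_Iio_ctble e σ)
      have hS : (insert σ (F '' Set.Iic x)).Countable := (hIic.image F).insert σ
      obtain ⟨b, hb⟩ := aux_ctble_bdd e _ hS
      refine ⟨b, lt_of_lt_of_le hσ1 (hb σ (Set.mem_insert _ _)), fun β hβ => ?_⟩
      exact hb _ (Set.mem_insert_of_mem _ ⟨β, hβ, rfl⟩)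
    choose stp hstp1 hstp2 using step
    set h : ℕ → X := fun n =>
      Nat.rec (e.symm ⟨0, (Cardinal.isSuccLimit_ord (Cardinal.aleph0_le_aleph 1)).bot_lt⟩) (fun _ ih => stp ih) n with hh
    have hlt : ∀ n, h n < h (n + 1) := fun n => hstp1 (h n)
    have hFle : ∀ n, ∀ β ≤ h n, F β ≤ h (n + 1) := fun n => hstp2 (h n)
    obtain ⟨m, hub, hmin⟩ := aux_lub e h
    have hm0 : ∃ c, c < m := ⟨h 0, lt_of_lt_of_le (hlt 0) (hub 1)⟩
    obtain ⟨hgm, -⟩ := hg m hm0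
    have hmF : m ≤ F (g m) := hF (g m) m ⟨hm0, rfl⟩
    have hex : ∃ n, g m < h n := by
      by_contra h'
      push_neg at h'
      exact absurd (hmin _ h') (not_le.2 hgm)
    obtain ⟨n, hn⟩ := hex
    have h3 : F (g m) ≤ h (n + 1) := hFle n _ hn.le
    exact absurd (lt_of_le_of_lt (hmF.trans h3)
      (lt_of_lt_of_le (hlt (n + 1)) (hub (n + 2)))) (lt_irrefl m)
  · -- some fiber unbounded
    push_neg at hbdd
    obtain ⟨β, hβ⟩ := hbdd
    choose nxt h1 h2 using hβ
    set γs : ℕ → X := fun n => Nat.rec (nxt β) (fun _ ih => nxt ih) n with hγs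
    have hγfib : ∀ n, (∃ c, c < γs n) ∧ g (γs n) = β := by
      intro n
      cases n with
      | zero => exact h1 β
      | succ k => exact h1 (γs k)
    have hγmono : ∀ n, γs n < γs (n + 1) := fun n => h2 (γs n)
    have hβγ : ∀ n, β < γs n := by
      intro n
      induction n with
      | zero => exact h2 β
      | succ k ih => exact ih.trans (hγmono k)
    have hmono' : Monotone γs := monotone_nat_of_le_succ fun n => (hγmono n).le
    obtain ⟨δ, hub, hlub⟩ := aux_lub e γs
    have hγδ : ∀ n, γs n < δ := fun n => lt_of_lt_of_le (hγmono n) (hub (n + 1))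
    obtain ⟨σ, hσ1, hσ2⟩ := aux_succ e β
    have hσγ : ∀ n, σ ≤ γs n := by
      intro n
      by_contra h'
      exact absurd ((hσ2 (γs n)).2 (not_le.1 h')) (not_le.2 (hβγ n))
    set E : Set (Set X) :=
      ((fun α => Set.Iic α) '' Set.Iio δ) ∪ ((fun α => Set.Ioi α) '' Set.Ioo β δ) with hE
    have hEopen : IsOpenCover E := by
      constructor
      · rintro U (⟨α, -, rfl⟩ | ⟨α, -, rfl⟩)
        · exact aux_Iic_open e α
        · exact isOpen_Ioi
      · apply Set.eq_univ_of_forall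
        intro x
        rcases lt_or_ge x δ with h | h
        · exact ⟨Set.Iic x, Set.mem_union_left _ ⟨x, h, rfl⟩, le_refl x⟩
        · exact ⟨Set.Ioi (γs 0), Set.mem_union_right _ ⟨γs 0, ⟨hβγ 0, hγδ 0⟩, rfl⟩,
            lt_of_lt_of_le (hγδ 0) h⟩
    have hEct : E.Countable :=
      ((aux_Iio_ctble e δ).image _).union
        ((Set.Countable.mono Set.Ioo_subset_Iio_self (aux_Iio_ctble e δ)).image _)
    have hrE := hr E hEopen hEct
    have hrefKE : ∀ n, Refines (K (γs n)) E := by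
      intro n U hU
      rcases hU with rfl | hU
      · exact ⟨Set.Iic (γs n), Set.mem_union_left _ ⟨γs n, hγδ n, rfl⟩, subset_rfl⟩
      · rw [Set.mem_singleton_iff] at hU; subst hU
        exact ⟨Set.Ioi (γs n), Set.mem_union_right _ ⟨γs n, ⟨hβγ n, hγδ n⟩, rfl⟩, subset_rfl⟩
    have hmonKE : ∀ n, Refines (r (K (γs n))) (r E) := fun n =>
      hmono _ _ (hKopen _) hEopen (hKct _) hEct (hrefKE n)
    have hYex : ∀ n, ∃ Y, Y ∈ r E ∧ W (γs n) ⊆ Y := by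
      intro n
      obtain ⟨Y, hY, hWY⟩ := hmonKE n (W (γs n)) (hWmem (γs n))
      exact ⟨Y, hY, hWY⟩
    choose Y hYmem hWsubY using hYex
    have hIocW : ∀ n, Set.Ioc β (γs n) ⊆ W (γs n) := by
      intro n
      have hgn := hg (γs n) (hγfib n).1
      rw [(hγfib n).2] at hgn
      exact hgn.2
    have hσY : ∀ n, σ ∈ Y n := fun n => hWsubY n (hIocW n ⟨hσ1, hσγ n⟩)
    have hPFfin : Finite ↥{U ∈ r E | σ ∈ U} := (hrE.2.1 σ).to_subtype
    obtain ⟨⟨U, hUmem, hσU⟩, hUinf⟩ := Finite.exists_infinite_fiber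
      (fun n : ℕ => (⟨Y n, hYmem n, hσY n⟩ : ↥{U ∈ r E | σ ∈ U}))
    have hA : {n : ℕ | Y n = U}.Infinite := by
      refine Set.Infinite.mono ?_ (Set.infinite_coe_iff.1 hUinf)
      intro n hn
      exact Subtype.ext_iff.mp hn
    have hAub : ∀ k : ℕ, ∃ n, Y n = U ∧ k ≤ n := by
      intro k
      by_contra h'
      push_neg at h'
      exact hA (Set.Finite.subset (Set.finite_lt_nat k) fun n hn => h' n hn)
    obtain ⟨V, hV, hUV⟩ := hrE.2.2 U hUmem
    rcases hV with ⟨α, hα, rfl⟩ | ⟨α, hα, rfl⟩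
    · have hall : ∀ n, γs n ≤ α := by
        intro n
        obtain ⟨n', hn', hnn'⟩ := hAub n
        have hγU : γs n' ∈ U := hn' ▸ hWsubY n' (hIocW n' ⟨hβγ n', le_refl _⟩)
        exact (hmono' hnn').trans (hUV hγU)
      exact absurd (hlub α hall) (not_le.2 hα)
    · have hασ : α < σ := hUV hσU
      exact absurd ((hσ2 α).2 hασ) (not_le.2 hα.1)
end

section
/- Monotone (countable) metacompactness is inherited by closed subspaces: if X is monotonically (countably) metacompact and Y ⊆ X is closed, then the subspace Y is monotonically (countably) metacompact. -/
open Set TopologicalSpace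

section Aux

variable {X : Type*} [TopologicalSpace X]

/-- Largest open set of `X` whose trace on `Y` is contained in `U'`. -/
def extOp (Y : Set X) (U' : Set ↥Y) : Set X :=
  ⋃₀ {W | IsOpen W ∧ (Subtype.val ⁻¹' W : Set ↥Y) ⊆ U'}

lemma extOp_isOpen (Y : Set X) (U' : Set ↥Y) : IsOpen (extOp Y U') :=
  isOpen_sUnion fun _ h => h.1

lemma extOp_preimage (Y : Set X) (U' : Set ↥Y) :
    (Subtype.val ⁻¹' extOp Y U' : Set ↥Y) ⊆ U' := by
  intro y hy
  obtain ⟨W, ⟨_, hW2⟩, hyW⟩ := hy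
  exact hW2 hyW

lemma extOp_superset {Y : Set X} {U' : Set ↥Y} (h : IsOpen U') :
    U' ⊆ Subtype.val ⁻¹' extOp Y U' := by
  obtain ⟨W0, hW0, rfl⟩ := isOpen_induced_iff.mp h
  intro y hy
  exact ⟨W0, ⟨hW0, subset_rfl⟩, hy⟩

lemma extOp_mono {Y : Set X} {U' V' : Set ↥Y} (h : U' ⊆ V') :
    extOp Y U' ⊆ extOp Y V' :=
  sUnion_subset_sUnion fun W hW => ⟨hW.1, hW.2.trans h⟩

/-- Canonical extension of a cover of `Y` to a cover of `X`. -/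
def ExtC (Y : Set X) (U : Set (Set ↥Y)) : Set (Set X) :=
  insert Yᶜ (extOp Y '' U)

lemma ExtC_cover {Y : Set X} (hY : IsClosed Y) {U : Set (Set ↥Y)}
    (hU : IsOpenCover U) : IsOpenCover (ExtC Y U) := by
  constructor
  · rintro W (rfl | ⟨U', _, rfl⟩)
    · exact hY.isOpen_compl
    · exact extOp_isOpen Y U'
  · apply eq_univ_of_forall
    intro x
    by_cases hx : x ∈ Y
    · have : (⟨x, hx⟩ : ↥Y) ∈ ⋃₀ U := hU.2 ▸ mem_univ _
      obtain ⟨U', hU', hmem⟩ := this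
      exact ⟨extOp Y U', Or.inr ⟨U', hU', rfl⟩,
        extOp_superset (hU.1 U' hU') hmem⟩
    · exact ⟨Yᶜ, Or.inl rfl, hx⟩

lemma ExtC_refines {Y : Set X} {U V : Set (Set ↥Y)} (h : Refines U V) :
    Refines (ExtC Y U) (ExtC Y V) := by
  rintro W (rfl | ⟨U', hU', rfl⟩)
  · exact ⟨Yᶜ, Or.inl rfl, subset_rfl⟩
  · obtain ⟨V', hV', hsub⟩ := h U' hU'
    exact ⟨extOp Y V', Or.inr ⟨V', hV', rfl⟩, extOp_mono hsub⟩

lemma key_lemma {Y : Set X} (hY : IsClosed Y)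
    (P : Set (Set X) → Prop) (Q : Set (Set ↥Y) → Prop)
    (hPQ : ∀ U, Q U → P (ExtC Y U))
    (r : Set (Set X) → Set (Set X))
    (hr1 : ∀ U, _root_.IsOpenCover U → P U →
      _root_.IsOpenCover (r U) ∧ PointFinite (r U) ∧ Refines (r U) U)
    (hr2 : ∀ U V, _root_.IsOpenCover U → _root_.IsOpenCover V → P U → P V →
      Refines U V → Refines (r U) (r V)) :
    ∃ s : Set (Set ↥Y) → Set (Set ↥Y),
      (∀ U, _root_.IsOpenCover U → Q U →
        _root_.IsOpenCover (s U) ∧ PointFinite (s U) ∧ Refines (s U) U) ∧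
      (∀ U V, _root_.IsOpenCover U → _root_.IsOpenCover V → Q U → Q V →
        Refines U V → Refines (s U) (s V)) := by
  refine ⟨fun U => (fun W => (Subtype.val ⁻¹' W : Set ↥Y)) ''
      {W ∈ r (ExtC Y U) | ¬ W ⊆ Yᶜ}, ?_, ?_⟩
  · intro U hU hQ
    obtain ⟨hcov, hpf, href⟩ := hr1 _ (ExtC_cover hY hU) (hPQ U hQ)
    refine ⟨⟨?_, ?_⟩, ?_, ?_⟩
    · rintro A ⟨W, ⟨hW, _⟩, rfl⟩
      exact (hcov.1 W hW).preimage continuous_subtype_val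
    · apply eq_univ_of_forall
      intro y
      have : (y : X) ∈ ⋃₀ r (ExtC Y U) := hcov.2 ▸ mem_univ _
      obtain ⟨W, hW, hyW⟩ := this
      have hne : ¬ W ⊆ Yᶜ := fun h => h hyW y.2
      exact ⟨Subtype.val ⁻¹' W, ⟨W, ⟨hW, hne⟩, rfl⟩, hyW⟩
    · intro y
      have hfin := (hpf (y : X)).image (fun W => (Subtype.val ⁻¹' W : Set ↥Y))
      apply hfin.subset
      rintro A ⟨⟨W, ⟨hW, _⟩, rfl⟩, hyA⟩
      exact ⟨W, ⟨hW, hyA⟩, rfl⟩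
    · rintro A ⟨W, ⟨hW, hne⟩, rfl⟩
      obtain ⟨Z, hZ, hsub⟩ := href W hW
      rcases hZ with rfl | ⟨U', hU', rfl⟩
      · exact absurd hsub hne
      · exact ⟨U', hU', (preimage_mono hsub).trans (extOp_preimage Y U')⟩
  · intro U V hU hV hQU hQV href
    rintro A ⟨W, ⟨hW, hne⟩, rfl⟩
    obtain ⟨W', hW', hsub⟩ := hr2 _ _ (ExtC_cover hY hU) (ExtC_cover hY hV)
      (hPQ U hQU) (hPQ V hQV) (ExtC_refines href) W hW
    refine ⟨Subtype.val ⁻¹' W', ⟨W', ⟨hW', fun h => hne (hsub.trans h)⟩, rfl⟩,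
      preimage_mono hsub⟩

end Aux

theorem stmt16 {X : Type*} [TopologicalSpace X] (Y : Set X) (hY : IsClosed Y) :
    (MonotonicallyMetacompact X → MonotonicallyMetacompact ↥Y) ∧
    (MonotonicallyCountablyMetacompact X → MonotonicallyCountablyMetacompact ↥Y) := by
  constructor
  · rintro ⟨r, hr1, hr2⟩
    obtain ⟨s, hs1, hs2⟩ := key_lemma hY (fun _ => True) (fun _ => True)
      (fun _ _ => trivial) r (fun U hU _ => hr1 U hU)
      (fun U V hU hV _ _ h => hr2 U V hU hV h)
    exact ⟨s, fun U hU => hs1 U hU trivial,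
      fun U V hU hV h => hs2 U V hU hV trivial trivial h⟩
  · rintro ⟨r, hr1, hr2⟩
    have hPQ : ∀ U : Set (Set ↥Y), U.Countable → (ExtC Y U).Countable :=
      fun U hU => (hU.image _).insert _
    obtain ⟨s, hs1, hs2⟩ := key_lemma hY Set.Countable Set.Countable hPQ r hr1 hr2
    exact ⟨s, hs1, hs2⟩
end
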